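/- The schema Cautious Importation, (p > ((p∧q) > r)) → ((p∧q) > r), is valid on an order frame (W,<) if and only if the frame is semi-flat. -/
import Mathlib


/-- Sentences of the language L: atoms p₀,p₁,…, negation, conjunction, and the
binary conditional `>` (written `cond`). -/
inductive Formula : Type
  | atom : ℕ → Formula
  | neg : Formula → Formula
  | conj : Formula → Formula → Formula
  | cond : Formula → Formula → Formula
  deriving DecidableEq

namespace Formula

/-- Material implication, defined as usual: p → q := ¬(p ∧ ¬q). -/
def impl (p q : Formula) : Formula := (p.conj q.neg).neg
/-- Disjunction, defined as usual: p ∨ q := ¬(¬p ∧ ¬q). -/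
def disj (p q : Formula) : Formula := (p.neg.conj q.neg).neg
/-- Material biconditional, defined as usual. -/
def biimp (p q : Formula) : Formula := (p.impl q).conj (q.impl p)
/-- □p abbreviates ¬p > p. -/
def box (p : Formula) : Formula := p.neg.cond p
/-- ◇p abbreviates ¬□¬p. -/
def dia (p : Formula) : Formula := p.neg.box.neg
/-- ⊥ abbreviates p₀ ∧ ¬p₀. -/
def bot : Formula := (atom 0).conj (atom 0).neg

end Formula

/-- An order frame: a nonempty type of worlds `W` together with, for each world
`w`, a strict well-order `lt w` (writing `lt w x y` for `x <_w y`) of a subset of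
`W` (the field of `lt w`: the relation is transitive, well-founded, and connected
on its field), such that `x <_w y` implies `w = x` or `w <_w x`. -/
structure OrderFrame (W : Type) : Type where
  nonempty : Nonempty W
  lt : W → W → W → Prop
  trans : ∀ w x y z, lt w x y → lt w y z → lt w x z
  wf : ∀ w, WellFounded (lt w)
  connected : ∀ w x y, (∃ z, lt w x z ∨ lt w z x) → (∃ z, lt w y z ∨ lt w z y) →
      x ≠ y → lt w x y ∨ lt w y x
  center : ∀ w x y, lt w x y → x = w ∨ lt w w x

namespace OrderFrame

variable {W : Type}

/-- Accessibility: `v ∈ R(w)` where `R(w) = {w} ∪ {v : w <_w v}`. -/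
def acc (F : OrderFrame W) (w v : W) : Prop := v = w ∨ F.lt w w v

/-- `x ≤_w y` iff `x, y ∈ R(w)` and not `y <_w x`. -/
def wkle (F : OrderFrame W) (w x y : W) : Prop :=
  F.acc w x ∧ F.acc w y ∧ ¬ F.lt w y x

end OrderFrame

/-- Truth at a world of an order model: atoms via the valuation `V`, Booleans
classically, and `p > q` is true at `w` iff either no world in `R(w)` satisfies `p`,
or there is `y ∈ R(w)` satisfying `p ∧ q` such that no `x <_w y` satisfies `p`. -/
def Truth {W : Type} (F : OrderFrame W) (V : ℕ → Set W) : Formula → W → Prop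
  | .atom n, w => w ∈ V n
  | .neg p, w => ¬ Truth F V p w
  | .conj p q, w => Truth F V p w ∧ Truth F V q w
  | .cond p q, w =>
      (∀ v, F.acc w v → ¬ Truth F V p v) ∨
      ∃ y, F.acc w y ∧ Truth F V p y ∧ Truth F V q y ∧
        ∀ x, F.lt w x y → ¬ Truth F V p x

/-- A frame is semi-flat iff for all w,x,y,z: if x <_w y and (y ≤_w z or
z ∈ R(x)\R(w)), then y ≤_x z. -/
def SemiFlat {W : Type} (F : OrderFrame W) : Prop :=
  ∀ w x y z, F.lt w x y →
    (F.wkle w y z ∨ (F.acc x z ∧ ¬ F.acc w z)) → F.wkle x y z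

/-- The accessibility relation of the frame is transitive. -/
def TransAcc {W : Type} (F : OrderFrame W) : Prop :=
  ∀ w u v, F.acc w u → F.acc u v → F.acc w v

/-- A frame is flat iff it is semi-flat and its accessibility relation is
transitive. -/
def Flat {W : Type} (F : OrderFrame W) : Prop := SemiFlat F ∧ TransAcc F


namespace OrderFrame

variable {W : Type} (F : OrderFrame W)

lemma irrefl' (w a : W) : ¬ F.lt w a a := (F.wf w).isIrrefl.irrefl a

lemma asymm' (w a b : W) (h : F.lt w a b) : ¬ F.lt w b a :=
  fun h' => F.irrefl' w a (F.trans w a b a h h')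

lemma acc_of_lt {w a b : W} (h : F.lt w a b) : F.acc w a := by
  rcases F.center w a b h with h1 | h1
  · exact Or.inl h1
  · exact Or.inr h1

lemma acc_of_lt' {w a b : W} (h : F.lt w a b) : F.acc w b := by
  rcases F.center w a b h with rfl | h1
  · exact Or.inr h
  · exact Or.inr (F.trans w w a b h1 h)

lemma tri (w a b : W) (ha : F.acc w a) (hb : F.acc w b) :
    a = b ∨ F.lt w a b ∨ F.lt w b a := by
  by_cases hab : a = b
  · exact Or.inl hab
  rcases ha with rfl | ha
  · rcases hb with rfl | hb
    · exact Or.inl rfl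
    · exact Or.inr (Or.inl hb)
  · rcases hb with rfl | hb
    · exact Or.inr (Or.inr ha)
    · exact Or.inr (F.connected w a b ⟨w, Or.inr ha⟩ ⟨w, Or.inr hb⟩ hab)

end OrderFrame

section Aux

variable {W : Type} (F : OrderFrame W)

/-- Semi-flatness implies validity of Cautious Importation. -/
lemma semiflat_imp_valid (hsf : SemiFlat F) (V : ℕ → Set W) (w : W) (p q r : Formula) :
    Truth F V ((p.cond ((p.conj q).cond r)).impl ((p.conj q).cond r)) w := by
  simp only [Formula.impl, Truth]
  rintro ⟨hX, hY⟩
  apply hY; clear hY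
  by_cases hB : ∀ v, F.acc w v → ¬ Truth F V (p.conj q) v
  · exact Or.inl hB
  push_neg at hB
  obtain ⟨v₀, hv₀acc, hv₀B⟩ := hB
  rcases hX with hX | ⟨y₀, hy₀acc, hy₀p, hy₀T, hy₀min⟩
  · exact absurd hv₀B.1 (hX v₀ hv₀acc)
  -- take the <_w minimal (p∧q)-world in R(w)
  obtain ⟨m₀, ⟨hm₀acc, hm₀B⟩, hmin⟩ :=
    (F.wf w).has_min {v | F.acc w v ∧ Truth F V (p.conj q) v} ⟨v₀, hv₀acc, hv₀B⟩
  have minB : ∀ u, F.lt w u m₀ → ¬ Truth F V (p.conj q) u := fun u hu hBu =>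
    hmin u ⟨F.acc_of_lt hu, hBu⟩ hu
  have hnm₀y₀ : ¬ F.lt w m₀ y₀ := fun h => hy₀min m₀ h hm₀B.1
  have hr : Truth F V r m₀ := by
    rcases F.tri w y₀ m₀ hy₀acc hm₀acc with heq | hlt | hlt'
    · -- y₀ = m₀
      subst heq
      rcases hy₀T with h | ⟨m, hmacc, hmB, hmr, hmmin⟩
      · exact absurd hm₀B (h y₀ (Or.inl rfl))
      rcases hmacc with rfl | hmlt
      · exact hmr
      · exact absurd hm₀B (hmmin y₀ hmlt)
    · -- y₀ <_w m₀
      have haccy₀m₀ : F.acc y₀ m₀ :=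
        (hsf w y₀ m₀ m₀ hlt (Or.inl ⟨hm₀acc, hm₀acc, F.irrefl' w m₀⟩)).2.1
      rcases hy₀T with h | ⟨m, hmacc, hmB, hmr, hmmin⟩
      · exact absurd hm₀B (h m₀ haccy₀m₀)
      have hmm₀ : m = m₀ := by
        by_contra hne
        have hnotlt : ¬ F.lt y₀ m₀ m := fun h => hmmin m₀ h hm₀B
        have hlt2 : F.lt y₀ m m₀ := by
          rcases F.tri y₀ m m₀ hmacc haccy₀m₀ with h | h | h
          · exact absurd h hne
          · exact h
          · exact absurd h hnotlt
        by_cases haccwm : F.acc w m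
        · have hw : F.wkle w m₀ m :=
            ⟨hm₀acc, haccwm, fun h => minB m h hmB⟩
          exact (hsf w y₀ m₀ m hlt (Or.inl hw)).2.2 hlt2
        · exact (hsf w y₀ m₀ m hlt (Or.inr ⟨hmacc, haccwm⟩)).2.2 hlt2
      subst hmm₀; exact hmr
    · exact absurd hlt' hnm₀y₀
  exact Or.inr ⟨m₀, hm₀acc, hm₀B, hr, minB⟩

end Aux

/-- the schema Cautious Importation, (p > ((p∧q) > r)) → ((p∧q) > r),
is valid on an order frame iff the frame is semi-flat. -/
theorem cautious_importation_characterizes_semiflat {W : Type} (F : OrderFrame W) :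
    (∀ (V : ℕ → Set W) (w : W) (p q r : Formula),
      Truth F V ((p.cond ((p.conj q).cond r)).impl ((p.conj q).cond r)) w) ↔
    SemiFlat F := by
  constructor
  · -- validity implies semi-flat
    intro hval
    by_contra hnsf
    simp only [SemiFlat, not_forall] at hnsf
    obtain ⟨w, x, y, z, hxy, H, hn⟩ := hnsf
    have hax : F.acc w x := F.acc_of_lt hxy
    have hay : F.acc w y := F.acc_of_lt' hxy
    have hyx : ¬ F.lt w y x := F.asymm' w x y hxy
    have hxxw : ¬ F.lt w x x := F.irrefl' w x
    by_cases haxy : F.acc x y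
    · by_cases haxz : F.acc x z
      · -- Case C : acc x y, acc x z, so lt x z y
        have hzy : F.lt x z y := by
          by_contra h
          exact hn ⟨haxy, haxz, h⟩
        have hnzx : ¬ F.lt w z x := by
          intro h
          have hzyw : F.lt w z y := F.trans w z x y h hxy
          rcases H with ⟨_, _, hnzyw⟩ | ⟨_, hnaz⟩
          · exact hnzyw hzyw
          · exact hnaz (F.acc_of_lt h)
        have := hval (fun n => if n = 0 then ({x, y, z} : Set W)
            else if n = 1 then ({y, z} : Set W) else {z}) w
            (.atom 0) (.atom 1) (.atom 2)
        simp only [Formula.impl, Truth, Set.mem_insert_iff, Set.mem_singleton_iff,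
          if_true, if_false, Set.mem_setOf_eq, reduceIte] at this
        apply this
        constructor
        · -- p > ((p∧q)>r) holds at w, witness x
          refine Or.inr ⟨x, hax, Or.inl rfl, ?_, ?_⟩
          · -- inner conditional at x, witness z
            refine Or.inr ⟨z, haxz, ⟨Or.inr (Or.inr rfl), Or.inr rfl⟩,
              rfl, ?_⟩
            rintro u hu ⟨-, hu2 | hu2⟩
            · rw [hu2] at hu; exact F.asymm' x z y hzy hu
            · rw [hu2] at hu; exact F.irrefl' x z hu
          · rintro u hu (hu1 | hu1 | hu1) <;> subst hu1
            · exact hxxw hu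
            · exact hyx hu
            · exact hnzx hu
        · -- (p∧q)>r fails at w
          rintro (h | ⟨m, hmacc, ⟨-, hm2 | hm2⟩, hmr, hmmin⟩)
          · exact h y hay ⟨Or.inr (Or.inl rfl), Or.inl rfl⟩
          · -- m = y : but r = {z}, so y = z, contradicting lt x z y irrefl
            rw [hm2] at hmr
            have hyz : y = z := hmr
            exact F.irrefl' x y (hyz ▸ hzy)
          · rw [hm2] at hmacc hmmin
            rcases H with ⟨_, haz, hnzyw⟩ | ⟨_, hnaz⟩
            · -- acc w z; then y <_w z, contradicting minimality of z
              have hzney : y ≠ z := fun h => F.irrefl' x y (h ▸ hzy)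
              rcases F.tri w y z hay haz with h | h | h
              · exact hzney h
              · exact hmmin y h ⟨Or.inr (Or.inl rfl), Or.inl rfl⟩
              · exact hnzyw h
            · exact hnaz hmacc
      · -- Case B : acc x y, ¬ acc x z
        have hwk : F.wkle w y z := by
          rcases H with h | ⟨h1, _⟩
          · exact h
          · exact absurd h1 haxz
        obtain ⟨-, haz, hnzyw⟩ := hwk
        have hnzx : ¬ F.lt w z x := fun h => hnzyw (F.trans w z x y h hxy)
        have := hval (fun n => if n = 0 then ({x, z} : Set W)
            else if n = 1 then ({z} : Set W) else (∅ : Set W)) w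
            (.atom 0) (.atom 1) (.atom 2)
        simp only [Formula.impl, Truth, Set.mem_insert_iff, Set.mem_singleton_iff,
          Set.mem_empty_iff_false, reduceIte] at this
        apply this
        constructor
        · refine Or.inr ⟨x, hax, Or.inl rfl, ?_, ?_⟩
          · -- inner conditional at x : vacuous
            refine Or.inl ?_
            rintro v hv ⟨-, hv2⟩
            subst hv2
            exact haxz hv
          · rintro u hu (hu1 | hu1) <;> subst hu1
            · exact hxxw hu
            · exact hnzx hu
        · rintro (h | ⟨m, -, ⟨-, -⟩, hmr, -⟩)
          · exact h z haz ⟨Or.inr rfl, rfl⟩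
          · exact hmr
    · -- Case A : ¬ acc x y
      have := hval (fun n => if n = 0 then ({x, y} : Set W)
          else if n = 1 then ({y} : Set W) else (∅ : Set W)) w
          (.atom 0) (.atom 1) (.atom 2)
      simp only [Formula.impl, Truth, Set.mem_insert_iff, Set.mem_singleton_iff,
        Set.mem_empty_iff_false, reduceIte] at this
      apply this
      constructor
      · refine Or.inr ⟨x, hax, Or.inl rfl, ?_, ?_⟩
        · refine Or.inl ?_
          rintro v hv ⟨-, hv2⟩
          subst hv2
          exact haxy hv
        · rintro u hu (hu1 | hu1) <;> subst hu1
          · exact hxxw hu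
          · exact hyx hu
      · rintro (h | ⟨m, -, ⟨-, -⟩, hmr, -⟩)
        · exact h y hay ⟨Or.inr rfl, rfl⟩
        · exact hmr
  · intro hsf V w p q r
    exact semiflat_imp_valid F hsf V w p q r
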